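/- Let G be a finite directed acyclic graph with source s and sink t in which every vertex lies on some directed s-t path, and let T ⊆ V(G) be a tracking set. Then the number of vertices with out-degree at least 2 is at most (|T| + 1)². -/

import Mathlib

/-- A directed path from `s` to `t` in the digraph with edge relation `E`,
represented as its list of vertices. -/
def DiPath {V : Type*} (E : V → V → Prop) (s t : V) (p : List V) : Prop :=
  p.Chain' E ∧ p.Nodup ∧ p.head? = some s ∧ p.getLast? = some t

/-- `T` is a tracking set: any two distinct directed `s`-`t` paths intersect `T`
in distinct subsets. -/
def Tracking {V : Type*} [DecidableEq V] (E : V → V → Prop) (s t : V) (T : Finset V) : Prop :=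
  ∀ p q : List V, DiPath E s t p → DiPath E s t q →
    p.toFinset ∩ T = q.toFinset ∩ T → p = q

/-- The digraph with edge relation `E` has no directed cycle. -/
def DiAcyclic {V : Type*} (E : V → V → Prop) : Prop :=
  ∀ v : V, ¬ Relation.TransGen E v v

set_option linter.unusedSectionVars false

section Aux

variable {V : Type*} [DecidableEq V] {E : V → V → Prop}

private lemma head?_cases {p : List V} {a : V} (h : p.head? = some a) : p = a :: p.tail := by
  cases p with
  | nil => simp at h
  | cons b l => simp only [List.head?_cons, Option.some.injEq] at h; simp [h]

private lemma ne_nil_of_head? {p : List V} {a : V} (h : p.head? = some a) : p ≠ [] := by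
  cases p <;> simp_all

private lemma mem_of_getLast?' {p : List V} {a : V} (h : p.getLast? = some a) : a ∈ p := by
  obtain ⟨hne, rfl⟩ := List.mem_getLast?_eq_getLast h
  exact List.getLast_mem hne

private lemma head?_append_left {p : List V} (q : List V) (h : p ≠ []) :
    (p ++ q).head? = p.head? := by
  cases p with
  | nil => exact absurd rfl h
  | cons a l => simp

private lemma getLast?_append_right (p : List V) {q : List V} (h : q ≠ []) :
    (p ++ q).getLast? = q.getLast? := by
  rw [List.getLast?_append]
  obtain ⟨a, ha⟩ := Option.isSome_iff_exists.1 (List.getLast?_isSome.2 h)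
  rw [ha]; rfl

private lemma getLast?_cons_of_ne_nil {l : List V} (h : l ≠ []) (a : V) :
    (a :: l).getLast? = l.getLast? := by
  cases l with
  | nil => exact absurd rfl h
  | cons b r => exact List.getLast?_cons_cons

private lemma chain'_nodup (hacyc : DiAcyclic E) {p : List V} (hp : p.Chain' E) : p.Nodup := by
  haveI : IsTrans V (Relation.TransGen E) := ⟨fun _ _ _ h1 h2 => h1.trans h2⟩
  have h2 := List.isChain_iff_pairwise.1 (hp.imp fun _ _ => Relation.TransGen.single)
  exact h2.imp fun {a b} h he => by rw [he] at h; exact hacyc b h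

private lemma chain'_of_suffix {p q : List V} (h : q <:+ p) (hp : p.Chain' E) : q.Chain' E := by
  obtain ⟨l, rfl⟩ := h; exact (List.isChain_append.1 hp).2.1

private lemma chain'_of_prefix {p q : List V} (h : q <+: p) (hp : p.Chain' E) : q.Chain' E := by
  obtain ⟨l, rfl⟩ := h; exact (List.isChain_append.1 hp).1

/-- Walks: chain with given endpoints. -/
private def IsWalk (E : V → V → Prop) (a b : V) (p : List V) : Prop :=
  p.Chain' E ∧ p.head? = some a ∧ p.getLast? = some b

private lemma IsWalk.append {a b c : V} {p q : List V}
    (hp : IsWalk E a b p) (hq : IsWalk E b c q) : IsWalk E a c (p ++ q.tail) := by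
  obtain ⟨hc1, hh1, hl1⟩ := hp
  obtain ⟨hc2, hh2, hl2⟩ := hq
  have hq' : q = b :: q.tail := head?_cases hh2
  cases htl : q.tail with
  | nil =>
    rw [htl] at hq'
    rw [hq'] at hl2
    simp only [List.getLast?_singleton, Option.some.injEq] at hl2
    rw [List.append_nil]
    exact ⟨hc1, hh1, by rw [hl1, hl2]⟩
  | cons w r =>
    rw [htl] at hq'
    rw [hq'] at hc2 hl2
    rw [List.getLast?_cons_cons] at hl2
    refine ⟨?_, ?_, ?_⟩
    · refine List.isChain_append.2 ⟨hc1, (List.isChain_cons.1 hc2).2, ?_⟩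
      intro x hx y hy
      rw [hl1] at hx
      simp only [Option.mem_def, Option.some.injEq] at hx
      subst hx
      exact (List.isChain_cons.1 hc2).1 y hy
    · rw [head?_append_left _ (ne_nil_of_head? hh1)]; exact hh1
    · rw [getLast?_append_right _ (List.cons_ne_nil w r)]; exact hl2

/-- Greedy continuation: follow `g` until hitting `T'`. -/
private noncomputable def greedy (hwf : WellFounded (fun a b : V => E b a)) (T' : Finset V)
    (g : V → V) (hg : ∀ v, v ∉ T' → E v (g v)) : V → List V :=
  hwf.fix (fun v ih => if h : v ∈ T' then [v] else v :: ih (g v) (hg v h))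

private lemma greedy_eq (hwf : WellFounded (fun a b : V => E b a)) (T' : Finset V)
    (g : V → V) (hg : ∀ v, v ∉ T' → E v (g v)) (v : V) :
    greedy hwf T' g hg v =
      if h : v ∈ T' then [v] else v :: greedy hwf T' g hg (g v) := by
  unfold greedy
  rw [WellFounded.fix_eq]

private lemma greedy_spec (hwf : WellFounded (fun a b : V => E b a)) (T' : Finset V)
    (g : V → V) (hg : ∀ v, v ∉ T' → E v (g v)) (v : V) :
    (greedy hwf T' g hg v).head? = some v ∧
    (greedy hwf T' g hg v).Chain' E ∧
    (greedy hwf T' g hg v).Chain' (fun u w => w = g u) ∧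
    (∃ b ∈ T', (greedy hwf T' g hg v).getLast? = some b) ∧
    (∀ u ∈ greedy hwf T' g hg v, u ∈ T' → (greedy hwf T' g hg v).getLast? = some u) := by
  induction v using WellFounded.induction hwf with
  | _ v ih =>
  rw [greedy_eq]
  by_cases h : v ∈ T'
  · rw [dif_pos h]
    refine ⟨rfl, List.isChain_singleton _, List.isChain_singleton _, ⟨v, h, rfl⟩, ?_⟩
    intro u hu _
    simp only [List.mem_singleton] at hu
    simp [hu]
  · rw [dif_neg h]
    obtain ⟨ihh, ihc, ihc2, ⟨b, hbT, hbl⟩, ihlast⟩ := ih (g v) (hg v h)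
    have hGne : greedy hwf T' g hg (g v) ≠ [] := ne_nil_of_head? ihh
    refine ⟨rfl, ?_, ?_, ⟨b, hbT, ?_⟩, ?_⟩
    · refine List.isChain_cons.2 ⟨?_, ihc⟩
      intro y hy
      rw [ihh] at hy
      simp only [Option.mem_def, Option.some.injEq] at hy
      exact hy ▸ hg v h
    · refine List.isChain_cons.2 ⟨?_, ihc2⟩
      intro y hy
      rw [ihh] at hy
      simp only [Option.mem_def, Option.some.injEq] at hy
      exact hy.symm
    · rw [getLast?_cons_of_ne_nil hGne, hbl]
    · intro u hu huT
      rcases List.mem_cons.1 hu with rfl | hu'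
      · exact absurd huT h
      · rw [getLast?_cons_of_ne_nil hGne]
        exact ihlast u hu' huT

private lemma exists_succ :
    ∀ (p : List V) (v t : V), p.Chain' E → v ∈ p → p.getLast? = some t → v ≠ t →
      ∃ w, E v w := by
  intro p
  induction p with
  | nil => intro v t _ hv; simp at hv
  | cons a q ih =>
    intro v t hc hv hl hne
    cases q with
    | nil =>
      simp only [List.mem_singleton] at hv
      simp only [List.getLast?_singleton, Option.some.injEq] at hl
      exact absurd (hv.trans hl) hne
    | cons b r =>
      rcases List.mem_cons.1 hv with rfl | hv'
      · exact ⟨b, (List.isChain_cons_cons.1 hc).1⟩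
      · exact ih v t (List.isChain_cons_cons.1 hc).2 hv'
          (by rw [← hl, List.getLast?_cons_cons]) hne

private lemma last_tracker (T : Finset V) :
    ∀ (A : List V), A ≠ [] → ∃ x A', A' <:+ A ∧ A'.head? = some x ∧
      A'.getLast? = A.getLast? ∧ (x ∈ T ∨ A' = A) ∧ ∀ u ∈ A'.tail, u ∉ T := by
  intro A
  induction A with
  | nil => simp
  | cons a q ih =>
    intro _
    cases q with
    | nil => exact ⟨a, [a], List.suffix_refl _, rfl, rfl, Or.inr rfl, by simp⟩
    | cons c r =>
      obtain ⟨x, A', hsuf, hh, hl, hx, htail⟩ := ih (by simp)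
      rcases hx with hx | rfl
      · exact ⟨x, A', hsuf.trans (List.suffix_cons a _), hh,
          by rw [hl, List.getLast?_cons_cons], Or.inl hx, htail⟩
      · by_cases hc : c ∈ T
        · exact ⟨c, c :: r, List.suffix_cons a _, rfl,
            by rw [List.getLast?_cons_cons], Or.inl hc, htail⟩
        · refine ⟨a, a :: c :: r, List.suffix_refl _, rfl, rfl, Or.inr rfl, ?_⟩
          intro u hu
          rcases List.mem_cons.1 hu with rfl | hu'
          · exact hc
          · exact htail u hu'

private lemma prefix_to {s t : V} {P : List V} (hP : DiPath E s t P) {z : V}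
    (hz : z ∈ P) (hzt : z ≠ t) :
    ∃ A : List V, A.Chain' E ∧ A.head? = some s ∧ A.getLast? = some z ∧ t ∉ A := by
  obtain ⟨hc, hnd, hh, hl⟩ := hP
  obtain ⟨p₁, p₂, rfl⟩ := List.append_of_mem hz
  have hre : p₁ ++ z :: p₂ = (p₁ ++ [z]) ++ p₂ := by simp
  refine ⟨p₁ ++ [z], chain'_of_prefix ⟨p₂, hre.symm⟩ hc, ?_, List.getLast?_concat, ?_⟩
  · rw [List.head?_append] at hh ⊢
    simpa using hh
  · intro ht
    rw [getLast?_append_right _ (List.cons_ne_nil z p₂)] at hl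
    have htm : t ∈ z :: p₂ := mem_of_getLast?' hl
    rcases List.mem_append.1 ht with ht1 | ht2
    · exact (List.nodup_append.1 hnd).2.2 _ ht1 _ htm rfl
    · simp only [List.mem_singleton] at ht2
      exact hzt ht2.symm

private lemma prefix_to' {s t : V} {P : List V} (hP : DiPath E s t P) {z : V} (hz : z ∈ P) :
    ∃ A : List V, A.Chain' E ∧ A.head? = some s ∧ A.getLast? = some z := by
  obtain ⟨hc, hnd, hh, hl⟩ := hP
  obtain ⟨p₁, p₂, rfl⟩ := List.append_of_mem hz
  have hre : p₁ ++ z :: p₂ = (p₁ ++ [z]) ++ p₂ := by simp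
  refine ⟨p₁ ++ [z], chain'_of_prefix ⟨p₂, hre.symm⟩ hc, ?_, List.getLast?_concat⟩
  rw [List.head?_append] at hh ⊢
  simpa using hh

private lemma suffix_from {s t : V} {P : List V} (hP : DiPath E s t P) {z : V} (hz : z ∈ P) :
    ∃ B : List V, B.Chain' E ∧ B.head? = some z ∧ B.getLast? = some t := by
  obtain ⟨hc, hnd, hh, hl⟩ := hP
  obtain ⟨p₁, p₂, rfl⟩ := List.append_of_mem hz
  refine ⟨z :: p₂, chain'_of_suffix ⟨p₁, rfl⟩ hc, rfl, ?_⟩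
  rw [getLast?_append_right _ (List.cons_ne_nil z p₂)] at hl
  exact hl

private lemma swap_lemma (g : V → V) {A₁ A₂ Ga Gb : List V} {z₂ y₂ : V}
    (hD : A₁ ++ Ga = A₂ ++ Gb) (hch : Ga.Chain' (fun u w => w = g u))
    (hz : A₂.getLast? = some z₂) (hy : Gb.head? = some y₂)
    (hlt : A₁.length < A₂.length) : y₂ = g z₂ := by
  have hA₂ne : A₂ ≠ [] := fun h => by rw [h] at hz; simp at hz
  have hGbne : Gb ≠ [] := ne_nil_of_head? hy
  have hn₂pos : 0 < A₂.length := List.length_pos_iff.2 hA₂ne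
  have hGbpos : 0 < Gb.length := List.length_pos_iff.2 hGbne
  have hlen : A₂.length < (A₂ ++ Gb).length := by rw [List.length_append]; omega
  have hz' : (A₂ ++ Gb)[A₂.length - 1]? = some z₂ := by
    rw [List.getElem?_append_left (by omega), ← List.getLast?_eq_getElem?]
    exact hz
  have hy' : (A₂ ++ Gb)[A₂.length]? = some y₂ := by
    rw [List.getElem?_append_right (le_refl _), Nat.sub_self, ← List.head?_eq_getElem?]
    exact hy
  have hGa : List.drop A₁.length (A₁ ++ Ga) = Ga := List.drop_left
  have hGalen : Ga.length = (A₂ ++ Gb).length - A₁.length := by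
    rw [← hD, List.length_append]; omega
  have e1 : A₁.length + (A₂.length - 1 - A₁.length) = A₂.length - 1 := by omega
  have e2 : A₁.length + (A₂.length - 1 - A₁.length + 1) = A₂.length := by omega
  have h1 : Ga[A₂.length - 1 - A₁.length]? = some z₂ := by
    rw [← hGa, List.getElem?_drop, hD, e1]
    exact hz'
  have h2 : Ga[A₂.length - 1 - A₁.length + 1]? = some y₂ := by
    rw [← hGa, List.getElem?_drop, hD, e2]
    exact hy'
  have hjlt : A₂.length - 1 - A₁.length < Ga.length - 1 := by omega
  have hstep := List.isChain_iff_getElem.1 hch (A₂.length - 1 - A₁.length) (by omega)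
  rw [List.getElem?_eq_getElem (by omega)] at h1 h2
  have hz2 := Option.some.inj h1
  have hy2 := Option.some.inj h2
  rw [← hz2, ← hy2]
  exact hstep

end Aux
/-- `z` is reachable from `x` by a directed path avoiding all vertices of
`(T ∪ {t}) \ {x}`, i.e. `z ∈ Z_x`. -/
def ZReach {V : Type*} [DecidableEq V] (E : V → V → Prop) (T : Finset V) (t x z : V) : Prop :=
  ∃ p : List V, p.Chain' E ∧ p.Nodup ∧ p.head? = some x ∧ p.getLast? = some z ∧
    ∀ v ∈ p, v ∈ T ∪ {t} → v = x

/-- `b` is reachable from `x` by a directed path avoiding all vertices of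
`(T ∪ {t}) \ {x, b}`. -/
def BReach {V : Type*} [DecidableEq V] (E : V → V → Prop) (T : Finset V) (t x b : V) : Prop :=
  ∃ p : List V, p.Chain' E ∧ p.Nodup ∧ p.head? = some x ∧ p.getLast? = some b ∧
    ∀ v ∈ p, v ∈ T ∪ {t} → v = x ∨ v = b

/-- The out-degree of `z`. -/
def outdeg {V : Type*} [Fintype V] (E : V → V → Prop) [DecidableRel E] (z : V) : ℕ :=
  (Finset.univ.filter fun y => E z y).card

/-- The in-degree of `z`. -/
def indeg {V : Type*} [Fintype V] (E : V → V → Prop) [DecidableRel E] (z : V) : ℕ :=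
  (Finset.univ.filter fun y => E y z).card

/-- the number of vertices of out-degree at least 2 is at most
`(|T| + 1)²` for any tracking set `T`. -/
theorem card_outdeg_ge_two_le {V : Type*} [Fintype V] [DecidableEq V]
    (E : V → V → Prop) [DecidableRel E] (s t : V)
    (hacyc : DiAcyclic E)
    (hsrc : ∀ v : V, ¬ E v s) (hsink : ∀ v : V, ¬ E t v)
    (hvert : ∀ v : V, ∃ p : List V, DiPath E s t p ∧ v ∈ p)
    (T : Finset V) (hT : Tracking E s t T) :
    (Finset.univ.filter fun z : V => 2 ≤ outdeg E z).card ≤ (T.card + 1) ^ 2 := by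
  classical
  -- well-foundedness of the edge relation (reversed)
  have hwf : WellFounded (fun a b : V => E b a) := by
    haveI : IsTrans V (fun a b : V => Relation.TransGen E b a) :=
      ⟨fun _ _ _ h1 h2 => Relation.TransGen.trans h2 h1⟩
    haveI : IsIrrefl V (fun a b : V => Relation.TransGen E b a) := ⟨fun a h => hacyc a h⟩
    exact Subrelation.wf (fun {x y} h => Relation.TransGen.single h)
      (Finite.wellFounded_of_trans_of_irrefl _)
  -- a successor function
  have hex : ∀ v : V, v ≠ t → ∃ w, E v w := by
    intro v hv
    obtain ⟨P, hP, hvP⟩ := hvert v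
    exact exists_succ P v t hP.1 hvP hP.2.2.2 hv
  have hgex : ∃ g : V → V, ∀ v : V, (∃ w, E v w) → E v (g v) := by
    refine ⟨fun v => if h : ∃ w, E v w then h.choose else v, fun v h => ?_⟩
    simp only [dif_pos h]
    exact h.choose_spec
  obtain ⟨g, hgE⟩ := hgex
  have hg : ∀ v : V, v ∉ T ∪ {t} → E v (g v) := by
    intro v hv
    simp only [Finset.mem_union, Finset.mem_singleton, not_or] at hv
    exact hgE v (hex v hv.2)
  have hodt : outdeg E t = 0 := by
    unfold outdeg
    rw [Finset.card_eq_zero, Finset.filter_eq_empty_iff]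
    exact fun y _ => hsink y
  -- key data for each branching vertex
  have key : ∀ z : V, 2 ≤ outdeg E z → ∃ (x y : V) (A : List V),
      (x ∈ T ∨ x = s) ∧ E z y ∧ y ≠ g z ∧ A.Chain' E ∧ A.head? = some x ∧
      A.getLast? = some z ∧ (∀ u ∈ A, u ∈ T ∪ {t} → u = x) := by
    intro z hz
    have hzt : z ≠ t := fun h => by rw [h, hodt] at hz; omega
    have hcard : 1 < (Finset.univ.filter fun y => E z y).card :=
      lt_of_lt_of_le one_lt_two hz
    obtain ⟨y, hyf, hyne⟩ := Finset.exists_mem_ne hcard (g z)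
    have hEy : E z y := (Finset.mem_filter.1 hyf).2
    obtain ⟨P, hP, hzP⟩ := hvert z
    obtain ⟨A₀, hc₀, hh₀, hl₀, ht₀⟩ := prefix_to hP hzP hzt
    obtain ⟨x, A', hsuf, hh', hl', hx, htail⟩ :=
      last_tracker T A₀ (ne_nil_of_head? hh₀)
    refine ⟨x, y, A', ?_, hEy, hyne, chain'_of_suffix hsuf hc₀, hh',
      by rw [hl', hl₀], ?_⟩
    · rcases hx with hx | rfl
      · exact Or.inl hx
      · rw [hh₀] at hh'
        exact Or.inr (Option.some.inj hh').symm
    · intro u hu huT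
      have hA'd : A' = x :: A'.tail := head?_cases hh'
      rw [hA'd] at hu
      rcases List.mem_cons.1 hu with rfl | hu'
      · rfl
      · exfalso
        rcases Finset.mem_union.1 huT with h1 | h1
        · exact htail u hu' h1
        · rw [Finset.mem_singleton] at h1
          subst h1
          exact ht₀ (hsuf.subset (by rw [hA'd]; exact List.mem_cons_of_mem _ hu'))
  choose xf yf Af hxs hEy hyne hcA hhA hlA htA using key
  -- assemble the middle walks
  have hGspec := greedy_spec hwf (T ∪ {t}) g hg
  have mkD : ∀ z (hz : 2 ≤ outdeg E z) (b : V),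
      (greedy hwf (T ∪ {t}) g hg (yf z hz)).getLast? = some b →
      IsWalk E (xf z hz) b (Af z hz ++ greedy hwf (T ∪ {t}) g hg (yf z hz)) ∧
      (∀ u ∈ Af z hz ++ greedy hwf (T ∪ {t}) g hg (yf z hz),
        u ∈ T ∪ {t} → u = xf z hz ∨ u = b) := by
    intro z hz b hbl
    have hq : IsWalk E z b (z :: greedy hwf (T ∪ {t}) g hg (yf z hz)) := by
      refine ⟨?_, rfl, ?_⟩
      · refine List.isChain_cons.2 ⟨?_, (hGspec (yf z hz)).2.1⟩
        intro w hw
        rw [(hGspec (yf z hz)).1] at hw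
        simp only [Option.mem_def, Option.some.injEq] at hw
        exact hw ▸ hEy z hz
      · rw [getLast?_cons_of_ne_nil (ne_nil_of_head? (hGspec (yf z hz)).1)]
        exact hbl
    have hA : IsWalk E (xf z hz) z (Af z hz) := ⟨hcA z hz, hhA z hz, hlA z hz⟩
    refine ⟨hA.append hq, ?_⟩
    intro u hu huT
    rcases List.mem_append.1 hu with hu | hu
    · exact Or.inl (htA z hz u hu huT)
    · have := (hGspec (yf z hz)).2.2.2.2 u hu huT
      rw [hbl] at this
      exact Or.inr (Option.some.inj this).symm
  -- the injection into pairs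
  refine le_trans (Finset.card_le_card_of_injOn
    (t := (insert s T) ×ˢ (insert t T))
    (fun z => if hz : 2 ≤ outdeg E z then
        (xf z hz, ((greedy hwf (T ∪ {t}) g hg (yf z hz)).getLast?).getD t)
      else (s, t)) ?_ ?_) ?_
  · -- maps to (insert s T) ×ˢ (insert t T)
    intro z hzS
    have hz : 2 ≤ outdeg E z := (Finset.mem_filter.1 hzS).2
    simp only [dif_pos hz]
    rw [Finset.mem_coe, Finset.mem_product]
    constructor
    · rcases hxs z hz with h | h
      · exact Finset.mem_insert_of_mem h
      · rw [h]; exact Finset.mem_insert_self _ _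
    · obtain ⟨b, hbT, hbl⟩ := (hGspec (yf z hz)).2.2.2.1
      rw [hbl]
      simp only [Option.getD_some]
      rcases Finset.mem_union.1 hbT with h | h
      · exact Finset.mem_insert_of_mem h
      · rw [Finset.mem_singleton] at h; rw [h]; exact Finset.mem_insert_self _ _
  · -- injectivity
    intro z₁ hz₁S z₂ hz₂S heq
    have hz₁ : 2 ≤ outdeg E z₁ := (Finset.mem_filter.1 (Finset.mem_coe.1 hz₁S)).2
    have hz₂ : 2 ≤ outdeg E z₂ := (Finset.mem_filter.1 (Finset.mem_coe.1 hz₂S)).2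
    by_contra hne12
    simp only [dif_pos hz₁, dif_pos hz₂, Prod.mk.injEq] at heq
    obtain ⟨hxeq, hbeq⟩ := heq
    obtain ⟨b₁, hb₁T, hb₁l⟩ := (hGspec (yf z₁ hz₁)).2.2.2.1
    obtain ⟨b₂, hb₂T, hb₂l⟩ := (hGspec (yf z₂ hz₂)).2.2.2.1
    rw [hb₁l, hb₂l] at hbeq
    simp only [Option.getD_some] at hbeq
    -- hbeq : b₁ = b₂
    obtain ⟨WD₁, htr₁⟩ := mkD z₁ hz₁ b₁ hb₁l
    obtain ⟨WD₂, htr₂⟩ := mkD z₂ hz₂ b₂ hb₂l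
    rw [← hxeq] at WD₂ htr₂
    rw [← hbeq] at WD₂ htr₂
    -- the frame
    obtain ⟨Pp, hPp, hxPp⟩ := hvert (xf z₁ hz₁)
    obtain ⟨pre, hpc, hph, hpl⟩ := prefix_to' hPp hxPp
    obtain ⟨Pq, hPq, hbPq⟩ := hvert b₁
    obtain ⟨suf, hsc, hsh, hsl⟩ := suffix_from hPq hbPq
    have Wpre : IsWalk E s (xf z₁ hz₁) pre := ⟨hpc, hph, hpl⟩
    have Wsuf : IsWalk E b₁ t suf := ⟨hsc, hsh, hsl⟩
    have hxpre : xf z₁ hz₁ ∈ pre := mem_of_getLast?' hpl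
    have hsufd : suf = b₁ :: suf.tail := head?_cases hsh
    -- common description of the tracker intersection
    have hQT : ∀ D : List V, IsWalk E (xf z₁ hz₁) b₁ D →
        (∀ u ∈ D, u ∈ T ∪ {t} → u = xf z₁ hz₁ ∨ u = b₁) →
        ((pre ++ D.tail) ++ suf.tail).toFinset ∩ T =
        (pre.toFinset ∩ T) ∪ (({xf z₁ hz₁, b₁} : Finset V) ∩ T) ∪
          (suf.toFinset ∩ T) := by
      rintro D ⟨hc, hh, hl⟩ htr
      have hbD : b₁ ∈ D := mem_of_getLast?' hl
      have hDd : D = xf z₁ hz₁ :: D.tail := head?_cases hh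
      have hbQ : b₁ ∈ pre ∨ b₁ ∈ D.tail := by
        rcases List.mem_cons.1 (hDd ▸ hbD) with h | h
        · rw [h]; exact Or.inl hxpre
        · exact Or.inr h
      ext u
      simp only [List.toFinset_append, Finset.mem_inter, Finset.mem_union,
        List.mem_toFinset, Finset.mem_insert, Finset.mem_singleton]
      constructor
      · rintro ⟨hmem, huT⟩
        rcases hmem with (hm | hm) | hm
        · exact Or.inl (Or.inl ⟨hm, huT⟩)
        · have := htr u (List.mem_of_mem_tail hm) (Finset.mem_union_left _ huT)
          exact Or.inl (Or.inr ⟨this, huT⟩)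
        · exact Or.inr ⟨List.mem_of_mem_tail hm, huT⟩
      · rintro ((⟨hm, huT⟩ | ⟨hm, huT⟩) | ⟨hm, huT⟩)
        · exact ⟨Or.inl (Or.inl hm), huT⟩
        · rcases hm with rfl | rfl
          · exact ⟨Or.inl (Or.inl hxpre), huT⟩
          · rcases hbQ with h | h
            · exact ⟨Or.inl (Or.inl h), huT⟩
            · exact ⟨Or.inl (Or.inr h), huT⟩
        · rcases List.mem_cons.1 (hsufd ▸ hm) with rfl | hm'
          · rcases hbQ with h | h
            · exact ⟨Or.inl (Or.inl h), huT⟩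
            · exact ⟨Or.inl (Or.inr h), huT⟩
          · exact ⟨Or.inr hm', huT⟩
    -- the two spliced s-t paths
    have WQ₁ := (Wpre.append WD₁).append Wsuf
    have WQ₂ := (Wpre.append WD₂).append Wsuf
    have hDiQ₁ : DiPath E s t ((pre ++ (Af z₁ hz₁ ++
        greedy hwf (T ∪ {t}) g hg (yf z₁ hz₁)).tail) ++ suf.tail) :=
      ⟨WQ₁.1, chain'_nodup hacyc WQ₁.1, WQ₁.2.1, WQ₁.2.2⟩
    have hDiQ₂ : DiPath E s t ((pre ++ (Af z₂ hz₂ ++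
        greedy hwf (T ∪ {t}) g hg (yf z₂ hz₂)).tail) ++ suf.tail) :=
      ⟨WQ₂.1, chain'_nodup hacyc WQ₂.1, WQ₂.2.1, WQ₂.2.2⟩
    have hset := hT _ _ hDiQ₁ hDiQ₂ (by rw [hQT _ WD₁ htr₁, hQT _ WD₂ htr₂])
    have h2 : (Af z₁ hz₁ ++ greedy hwf (T ∪ {t}) g hg (yf z₁ hz₁)).tail =
        (Af z₂ hz₂ ++ greedy hwf (T ∪ {t}) g hg (yf z₂ hz₂)).tail :=
      List.append_cancel_left (List.append_cancel_right hset)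
    have hDD : Af z₁ hz₁ ++ greedy hwf (T ∪ {t}) g hg (yf z₁ hz₁) =
        Af z₂ hz₂ ++ greedy hwf (T ∪ {t}) g hg (yf z₂ hz₂) := by
      rw [head?_cases WD₁.2.1, head?_cases WD₂.2.1, h2]
    -- endgame: compare the positions of z₁ and z₂
    rcases Nat.lt_trichotomy (Af z₁ hz₁).length (Af z₂ hz₂).length with hlt | heqn | hgt
    · exact hyne z₂ hz₂ (swap_lemma g hDD (hGspec (yf z₁ hz₁)).2.2.1
        (hlA z₂ hz₂) (hGspec (yf z₂ hz₂)).1 hlt)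
    · have hAeq : Af z₁ hz₁ = Af z₂ hz₂ := by
        have h1 := List.take_left (l₁ := Af z₁ hz₁)
          (l₂ := greedy hwf (T ∪ {t}) g hg (yf z₁ hz₁))
        rw [hDD, heqn, List.take_left] at h1
        exact h1.symm
      apply hne12
      have := hlA z₁ hz₁
      rw [hAeq, hlA z₂ hz₂] at this
      exact (Option.some.inj this).symm
    · exact hyne z₁ hz₁ (swap_lemma g hDD.symm (hGspec (yf z₂ hz₂)).2.2.1
        (hlA z₁ hz₁) (hGspec (yf z₁ hz₁)).1 hgt)
  · -- counting
    calc ((insert s T) ×ˢ (insert t T)).card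
        = (insert s T).card * (insert t T).card := Finset.card_product _ _
      _ ≤ (T.card + 1) * (T.card + 1) :=
          Nat.mul_le_mul (Finset.card_insert_le _ _) (Finset.card_insert_le _ _)
      _ = (T.card + 1) ^ 2 := (pow_two _).symm
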